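/- Consider a finite Markov decision process: a nonempty finite state space S, a nonempty finite action space A, a transition kernel P assigning to each (s,a) a probability mass function P(·|s,a) on S, a reward function r : S × A → ℝ, and a discount factor γ ∈ [0,1). Let β assign to each state s a probability mass function β(·|s) on A, let V_β : S → ℝ satisfy V_β(s) = ∑_{a} β(a|s) · ( r(s,a) + γ · ∑_{s'} P(s'|s,a) · V_β(s') ) for all s, and define Q_β(s,a) = r(s,a) + γ · ∑_{s'} P(s'|s,a) · V_β(s'). Let π : S → A be a deterministic policy such that Q_β(s, π(s)) ≥ V_β(s) for all s ∈ S, and let V_π : S → ℝ satisfy V_π(s) = r(s, π(s)) + γ · ∑_{s'} P(s'|s, π(s)) · V_π(s') for all s. Then V_π(s) ≥ V_β(s) for all s ∈ S. -/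

import Mathlib

lemma pmf_sum_toReal_one {X : Type*} [Fintype X] (p : PMF X) :
    ∑ x : X, (p x).toReal = 1 := by
  have h : ∑ x : X, p x = 1 := by
    rw [← tsum_fintype (L := SummationFilter.unconditional _)]; exact p.tsum_coe
  have hne : ∀ x ∈ Finset.univ, p x ≠ ⊤ := fun x _ => p.apply_ne_top x
  rw [← ENNReal.toReal_sum hne, h, ENNReal.toReal_one]

/-- Policy improvement: if a deterministic policy `π` satisfies
`Q_β(s, π(s)) ≥ V_β(s)` at every state, then its value function dominates the
value function of the stochastic policy `β` everywhere. -/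
theorem policy_improvement {S A : Type*} [Fintype S] [Nonempty S]
    [Fintype A] [Nonempty A] (P : S → A → PMF S) (r : S → A → ℝ)
    (γ : ℝ) (hγ0 : 0 ≤ γ) (hγ1 : γ < 1)
    (β : S → PMF A) (Vβ : S → ℝ)
    (hVβ : ∀ s : S, Vβ s = ∑ a : A, ((β s) a).toReal *
      (r s a + γ * ∑ s' : S, (P s a s').toReal * Vβ s'))
    (Qβ : S → A → ℝ)
    (hQβ : ∀ s a, Qβ s a = r s a + γ * ∑ s' : S, (P s a s').toReal * Vβ s')
    (π : S → A) (hπ : ∀ s : S, Qβ s (π s) ≥ Vβ s)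
    (Vπ : S → ℝ)
    (hVπ : ∀ s : S, Vπ s = r s (π s) + γ * ∑ s' : S, (P s (π s) s').toReal * Vπ s') :
    ∀ s : S, Vπ s ≥ Vβ s := by
  set D : S → ℝ := fun s => Vβ s - Vπ s with hD
  obtain ⟨s₀, -, hs₀⟩ := Finset.exists_max_image (Finset.univ : Finset S) D
    ⟨Classical.arbitrary S, Finset.mem_univ _⟩
  have hmax : ∀ s : S, D s ≤ D s₀ := fun s => hs₀ s (Finset.mem_univ s)
  -- key: D s₀ ≤ γ * D s₀
  have hkey : D s₀ ≤ γ * D s₀ := by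
    have h1 : Vβ s₀ ≤ r s₀ (π s₀) + γ * ∑ s' : S, (P s₀ (π s₀) s').toReal * Vβ s' := by
      have := hπ s₀; rw [hQβ] at this; linarith
    have h2 : ∑ s' : S, (P s₀ (π s₀) s').toReal * Vβ s'
        ≤ (∑ s' : S, (P s₀ (π s₀) s').toReal * Vπ s') + D s₀ := by
      have : ∑ s' : S, (P s₀ (π s₀) s').toReal * Vβ s'
          - ∑ s' : S, (P s₀ (π s₀) s').toReal * Vπ s'
          = ∑ s' : S, (P s₀ (π s₀) s').toReal * D s' := by
        rw [← Finset.sum_sub_distrib]; congr 1; ext s'; simp [hD]; ring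
      have hle : ∑ s' : S, (P s₀ (π s₀) s').toReal * D s' ≤ D s₀ := by
        calc ∑ s' : S, (P s₀ (π s₀) s').toReal * D s'
            ≤ ∑ s' : S, (P s₀ (π s₀) s').toReal * D s₀ := by
              apply Finset.sum_le_sum
              intro i _
              exact mul_le_mul_of_nonneg_left (hmax i) ENNReal.toReal_nonneg
          _ = D s₀ := by rw [← Finset.sum_mul, pmf_sum_toReal_one, one_mul]
      linarith
    have h3 := hVπ s₀
    have hγ2 : γ * ∑ s' : S, (P s₀ (π s₀) s').toReal * Vβ s'
        ≤ γ * ((∑ s' : S, (P s₀ (π s₀) s').toReal * Vπ s') + D s₀) :=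
      mul_le_mul_of_nonneg_left h2 hγ0
    rw [mul_add] at hγ2
    have hd : D s₀ = Vβ s₀ - Vπ s₀ := rfl
    linarith
  have hD0 : D s₀ ≤ 0 := by nlinarith
  intro s
  have := le_trans (hmax s) hD0
  simp only [hD] at this
  linarith
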